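/- The function ρ ↦ log Σ_{y∈Y} (Σ_{x∈X} p(x,y)^{1/(1+ρ)})^{1+ρ} is differentiable at every ρ > −1, with derivative at ρ equal to H_{p̄^ρ}(x|y), the conditional entropy of the first coordinate given the second under the x−y tilted distribution p̄^ρ. -/

import Mathlib

open scoped BigOperators

noncomputable section

/-- `q` is a probability mass function on `Z`. -/
def IsPMF {Z : Type*} [Fintype Z] (q : Z → ℝ) : Prop :=
  (∀ z, 0 ≤ q z) ∧ ∑ z, q z = 1

/-- Shannon entropy in nats. -/
def entropy {Z : Type*} [Fintype Z] (q : Z → ℝ) : ℝ :=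
  - ∑ z, q z * Real.log (q z)

/-- Marginal on the second coordinate. -/
def margY {X Y : Type*} [Fintype X] (q : X × Y → ℝ) : Y → ℝ := fun y => ∑ x, q (x, y)

/-- Marginal on the first coordinate. -/
def margX {X Y : Type*} [Fintype Y] (q : X × Y → ℝ) : X → ℝ := fun x => ∑ y, q (x, y)

/-- Conditional entropy `H_q(x|y) = H(q) − H(q_Y)`. -/
def condEntXY {X Y : Type*} [Fintype X] [Fintype Y] (q : X × Y → ℝ) : ℝ :=
  entropy q - entropy (margY q)

/-- Conditional entropy `H_q(y|x) = H(q) − H(q_X)`. -/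
def condEntYX {X Y : Type*} [Fintype X] [Fintype Y] (q : X × Y → ℝ) : ℝ :=
  entropy q - entropy (margX q)

/-- `D(y,ρ) = Σ_x p(x,y)^{1/(1+ρ)}`. -/
def Dt {X Y : Type*} [Fintype X] (p : X × Y → ℝ) (ρ : ℝ) (y : Y) : ℝ :=
  ∑ x, p (x, y) ^ (1 / (1 + ρ))

/-- `B(ρ) = Σ_y D(y,ρ)^{1+ρ}`. -/
def Bt {X Y : Type*} [Fintype X] [Fintype Y] (p : X × Y → ℝ) (ρ : ℝ) : ℝ :=
  ∑ y, Dt p ρ y ^ (1 + ρ)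

/-- The `x−y` tilted distribution
`p̄^ρ(x,y) = (D(y,ρ)^{1+ρ}/B(ρ)) · (p(x,y)^{1/(1+ρ)}/D(y,ρ))`. -/
def xyTilted {X Y : Type*} [Fintype X] [Fintype Y] (p : X × Y → ℝ) (ρ : ℝ) :
    X × Y → ℝ :=
  fun z => (Dt p ρ z.2 ^ (1 + ρ) / Bt p ρ) * (p z ^ (1 / (1 + ρ)) / Dt p ρ z.2)

/-- Lemma 15: `d/dρ [log Σ_y (Σ_x p(x,y)^{1/(1+ρ)})^{1+ρ}] = H_{p̄^ρ}(x|y)`. -/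
theorem statement15 {X Y : Type*} [Fintype X] [Fintype Y] [Nonempty X] [Nonempty Y]
    (p : X × Y → ℝ) (hp : IsPMF p) (hpos : ∀ z, 0 < p z) (ρ : ℝ) (hρ : -1 < ρ) :
    HasDerivAt (fun σ : ℝ => Real.log (Bt p σ)) (condEntXY (xyTilted p ρ)) ρ := by
  have hs : (0:ℝ) < 1 + ρ := by linarith
  have hsne : (1:ℝ) + ρ ≠ 0 := hs.ne'
  have hDpos : ∀ (σ : ℝ) (y : Y), 0 < Dt p σ y := fun σ y =>
    Finset.sum_pos (fun x _ => Real.rpow_pos_of_pos (hpos _) _) Finset.univ_nonempty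
  have hBpos : ∀ σ : ℝ, 0 < Bt p σ := fun σ =>
    Finset.sum_pos (fun y _ => Real.rpow_pos_of_pos (hDpos σ y) _) Finset.univ_nonempty
  -- inner exponent derivative
  have hinv : HasDerivAt (fun σ : ℝ => 1 / (1 + σ)) (-(1 / (1 + ρ) ^ 2)) ρ := by
    have h1 : HasDerivAt (fun σ : ℝ => 1 + σ) 1 ρ := (hasDerivAt_id ρ).const_add 1
    have := h1.fun_inv hsne
    simp only [one_div]
    exact this.congr_deriv (by ring)
  -- per-term derivative
  have hterm : ∀ z : X × Y, HasDerivAt (fun σ : ℝ => p z ^ (1 / (1 + σ)))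
      (p z ^ (1 / (1 + ρ)) * Real.log (p z) * (-(1 / (1 + ρ) ^ 2))) ρ := fun z =>
    (Real.hasStrictDerivAt_const_rpow (hpos z) (1 / (1 + ρ))).hasDerivAt.comp ρ hinv
  set L : Y → ℝ := fun y => ∑ x, p (x, y) ^ (1 / (1 + ρ)) * Real.log (p (x, y)) with hL
  have hD : ∀ y, HasDerivAt (fun σ => Dt p σ y) (L y * (-(1 / (1 + ρ) ^ 2))) ρ := by
    intro y
    have h := HasDerivAt.fun_sum (fun x (_ : x ∈ Finset.univ) => hterm (x, y))
    rw [← Finset.sum_mul] at h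
    exact h
  set D' : Y → ℝ := fun y => L y * (-(1 / (1 + ρ) ^ 2)) with hD'
  set E' : Y → ℝ := fun y =>
    Dt p ρ y ^ (1 + ρ) * (Real.log (Dt p ρ y) + (1 + ρ) * (D' y / Dt p ρ y)) with hE'
  have hE : ∀ y, HasDerivAt (fun σ => Dt p σ y ^ (1 + σ)) (E' y) ρ := by
    intro y
    have hlog : HasDerivAt (fun σ => Real.log (Dt p σ y)) (D' y / Dt p ρ y) ρ :=
      (hD y).log (hDpos ρ y).ne'
    have hone : HasDerivAt (fun σ : ℝ => 1 + σ) 1 ρ := (hasDerivAt_id ρ).const_add 1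
    have hmul := hone.fun_mul hlog
    have hexp := hmul.exp
    have heq : (fun σ => Real.exp ((1 + σ) * Real.log (Dt p σ y)))
        = fun σ => Dt p σ y ^ (1 + σ) := by
      funext σ
      rw [Real.rpow_def_of_pos (hDpos σ y), mul_comm]
    rw [heq] at hexp
    convert hexp using 1
    simp only [hE']
    rw [Real.rpow_def_of_pos (hDpos ρ y)]
    ring
  have hB : HasDerivAt (fun σ => Bt p σ) (∑ y, E' y) ρ :=
    HasDerivAt.fun_sum (fun y (_ : y ∈ Finset.univ) => hE y)
  have hlogB : HasDerivAt (fun σ => Real.log (Bt p σ)) ((∑ y, E' y) / Bt p ρ) ρ :=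
    hB.log (hBpos ρ).ne'
  convert hlogB using 1
  -- the algebra: condEntXY (xyTilted p ρ) = (∑ y, E' y) / Bt p ρ
  set q : X × Y → ℝ := xyTilted p ρ with hq
  set B : ℝ := Bt p ρ with hBdef
  have hmarg : ∀ y, margY q y = Dt p ρ y ^ (1 + ρ) / B := by
    intro y
    simp only [margY, hq, xyTilted]
    rw [← Finset.mul_sum, ← Finset.sum_div]
    have hDt : (∑ x, p (x, y) ^ (1 / (1 + ρ))) = Dt p ρ y := rfl
    rw [hDt, div_self (hDpos ρ y).ne', mul_one]
  have hqval : ∀ z : X × Y,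
      q z = (Dt p ρ z.2 ^ (1 + ρ) / B) * (p z ^ (1 / (1 + ρ)) / Dt p ρ z.2) := fun z => rfl
  have hlogq : ∀ z : X × Y, Real.log (q z)
      = Real.log (Dt p ρ z.2 ^ (1 + ρ) / B)
        + ((1 / (1 + ρ)) * Real.log (p z) - Real.log (Dt p ρ z.2)) := by
    intro z
    rw [hqval z,
      Real.log_mul (div_pos (Real.rpow_pos_of_pos (hDpos ρ z.2) _) (hBpos ρ)).ne'
        (div_pos (Real.rpow_pos_of_pos (hpos z) _) (hDpos ρ z.2)).ne',
      Real.log_div (Real.rpow_pos_of_pos (hpos z) _).ne' (hDpos ρ z.2).ne',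
      Real.log_rpow (hpos z)]
  have key : condEntXY q
      = ∑ y, ∑ x, q (x, y)
          * (Real.log (Dt p ρ y) - (1 / (1 + ρ)) * Real.log (p (x, y))) := by
    rw [condEntXY]
    have h1 : entropy (margY q)
        = - ∑ y, ∑ x, q (x, y) * Real.log (Dt p ρ y ^ (1 + ρ) / B) := by
      rw [entropy]
      congr 1
      refine Finset.sum_congr rfl fun y _ => ?_
      have hstep : margY q y * Real.log (margY q y)
          = margY q y * Real.log (Dt p ρ y ^ (1 + ρ) / B) := by rw [hmarg y]
      rw [hstep]
      simp only [margY]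
      rw [Finset.sum_mul]
    have h2 : entropy q = - ∑ y, ∑ x, q (x, y) * Real.log (q (x, y)) := by
      rw [entropy]
      congr 1
      rw [Fintype.sum_prod_type, Finset.sum_comm]
    rw [h1, h2, neg_sub_neg, ← Finset.sum_sub_distrib]
    refine Finset.sum_congr rfl fun y _ => ?_
    rw [← Finset.sum_sub_distrib]
    refine Finset.sum_congr rfl fun x _ => ?_
    rw [hlogq (x, y)]
    ring
  rw [key, Finset.sum_div]
  refine Finset.sum_congr rfl fun y _ => ?_
  have expand : ∀ x : X,
      q (x, y) * (Real.log (Dt p ρ y) - (1 / (1 + ρ)) * Real.log (p (x, y)))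
      = (Dt p ρ y ^ (1 + ρ) / B / Dt p ρ y * Real.log (Dt p ρ y)) * p (x, y) ^ (1 / (1 + ρ))
        - (Dt p ρ y ^ (1 + ρ) / B / Dt p ρ y * (1 / (1 + ρ)))
            * (p (x, y) ^ (1 / (1 + ρ)) * Real.log (p (x, y))) := by
    intro x
    rw [hqval (x, y)]
    ring
  simp only [expand]
  rw [Finset.sum_sub_distrib, ← Finset.mul_sum, ← Finset.mul_sum]
  have hDt : (∑ x, p (x, y) ^ (1 / (1 + ρ))) = Dt p ρ y := rfl
  have hLy : (∑ x, p (x, y) ^ (1 / (1 + ρ)) * Real.log (p (x, y))) = L y := rfl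
  rw [hDt, hLy]
  simp only [hE', hD']
  have hDne : Dt p ρ y ≠ 0 := (hDpos ρ y).ne'
  have hBne : B ≠ 0 := (hBpos ρ).ne'
  field_simp
  ring
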